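/- Let f : R^n → R be differentiable, r : R^n → R convex, S ⊆ R^n convex, and ε ≥ 0. If x ∈ S satisfies inf_{y∈S} { ∇f(x)^T (y - x) + r(y) - r(x) } ≥ -ε, then for any γ > 0 and x⁺ = argmin_{y∈S} { ∇f(x)^T y + (1/(2γ))‖y - x‖² + r(y) }, the gradient mapping P_S(x,γ) = (1/γ)(x - x⁺) satisfies ‖P_S(x,γ)‖² ≤ ε/γ. -/

import Mathlib

theorem stmt_4 (n : ℕ) (f r : EuclideanSpace ℝ (Fin n) → ℝ)
    (S : Set (EuclideanSpace ℝ (Fin n)))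
    (g x xp : EuclideanSpace ℝ (Fin n)) (γ ε : ℝ)
    (hSne : S.Nonempty) (hSc : IsClosed S) (hS : Convex ℝ S)
    (hr : ConvexOn ℝ Set.univ r)
    (hγ : 0 < γ) (hε : 0 ≤ ε)
    (hx : x ∈ S)
    (hgrad : HasGradientAt f g x)
    (hstat : ∀ y ∈ S, -ε ≤ (inner ℝ g (y - x) : ℝ) + r y - r x)
    (hxp : xp ∈ S)
    (hmin : ∀ y ∈ S,
      (inner ℝ g xp : ℝ) + 1 / (2 * γ) * ‖xp - x‖ ^ 2 + r xp ≤
        (inner ℝ g y : ℝ) + 1 / (2 * γ) * ‖y - x‖ ^ 2 + r y) :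
    ‖(1 / γ) • (x - xp)‖ ^ 2 ≤ ε / γ := by
  set c : ℝ := ‖xp - x‖ ^ 2 with hc
  have hc0 : 0 ≤ c := by positivity
  set k : ℝ := 1 / (2 * γ) with hk
  have hk0 : 0 < k := by positivity
  set A : ℝ := (inner ℝ g (xp - x) : ℝ) + r xp - r x with hA
  have key : ∀ t : ℝ, 0 < t → t ≤ 1 → A ≤ (t - 2) * (k * c) := by
    intro t ht0 ht1
    set y : EuclideanSpace ℝ (Fin n) := (1 - t) • xp + t • x with hy
    have hyS : y ∈ S := hS hxp hx (by linarith) ht0.le (by ring)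
    have h1 := hmin y hyS
    have hi : (inner ℝ g y : ℝ) = (1 - t) * (inner ℝ g xp : ℝ) + t * (inner ℝ g x : ℝ) := by
      rw [hy, inner_add_right, real_inner_smul_right, real_inner_smul_right]
    have hrle : r y ≤ (1 - t) * r xp + t * r x :=
      hr.2 (Set.mem_univ xp) (Set.mem_univ x) (by linarith) ht0.le (by ring)
    have hyx : y - x = (1 - t) • (xp - x) := by
      simp [hy]; module
    have hn : ‖y - x‖ ^ 2 = (1 - t) ^ 2 * c := by
      rw [hyx, norm_smul, mul_pow, hc]
      congr 1
      rw [Real.norm_eq_abs, sq_abs]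
    rw [hi, hn] at h1
    have hsub : (inner ℝ g (xp - x) : ℝ) = (inner ℝ g xp : ℝ) - (inner ℝ g x : ℝ) :=
      inner_sub_right (𝕜 := ℝ) g xp x
    have h2 : t * A ≤ t * ((t - 2) * (k * c)) := by
      rw [hA, hsub]
      nlinarith [h1, hrle]
    exact le_of_mul_le_mul_left (by linarith [h2]) ht0
  have hA2 : A ≤ -2 * (k * c) := by
    by_contra hlt
    push_neg at hlt
    rcases eq_or_lt_of_le (mul_nonneg hk0.le hc0) with h0 | h0
    · have := key 1 one_pos le_rfl
      rw [← h0] at this hlt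
      linarith
    · set t : ℝ := min 1 ((A + 2 * (k * c)) / (2 * (k * c))) with hT
      have hnum : 0 < A + 2 * (k * c) := by linarith
      have ht0 : 0 < t := lt_min one_pos (by positivity)
      have ht1 : t ≤ 1 := min_le_left _ _
      have := key t ht0 ht1
      have ht2 : t ≤ (A + 2 * (k * c)) / (2 * (k * c)) := min_le_right _ _
      have hle : t * (2 * (k * c)) ≤ A + 2 * (k * c) := by
        have h' := mul_le_mul_of_nonneg_right ht2
          (by positivity : (0:ℝ) ≤ 2 * (k * c))
        rwa [div_mul_cancel₀ _ (by positivity : (2 * (k * c)) ≠ 0)] at h'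
      nlinarith [key t ht0 ht1, hle, hlt, h0]
  have hst := hstat xp hxp
  have hcle : c ≤ γ * ε := by
    have : -ε ≤ -2 * (k * c) := le_trans hst hA2
    have heq : -2 * (1 / (2 * γ) * c) = -(c / γ) := by field_simp
    rw [heq] at this
    have : c / γ ≤ ε := by linarith
    have := (div_le_iff₀ hγ).mp this
    linarith
  have hnorm : ‖(1 / γ) • (x - xp)‖ ^ 2 = (1 / γ) ^ 2 * c := by
    rw [norm_smul, mul_pow, hc, norm_sub_rev]
    congr 1
    rw [Real.norm_eq_abs, sq_abs]
  rw [hnorm]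
  rw [div_eq_mul_inv ε γ]
  have : (1 / γ) ^ 2 * c ≤ (1 / γ) ^ 2 * (γ * ε) :=
    mul_le_mul_of_nonneg_left hcle (by positivity)
  calc (1 / γ) ^ 2 * c ≤ (1 / γ) ^ 2 * (γ * ε) := this
    _ = ε * γ⁻¹ := by field_simp
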